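/- Let W ⊆ E be a nonempty closed convex set with diameter at most D, and let f_1, …, f_T : E → ℝ be convex differentiable functions. Run SOGD with parameters δ > 0 and α = D/√2: w_1 ∈ W, η_t = α/√(δ + Σ_{i=1}^t ‖∇f_i(w_i)‖²), w_{t+1} = Π_W[w_t − η_t ∇f_t(w_t)]. Then for every w ∈ W: Σ_{t=1}^T f_t(w_t) − Σ_{t=1}^T f_t(w) ≤ √(2 D²) · √(δ + Σ_{t=1}^T ‖∇f_t(w_t)‖²). -/

import Mathlib

open Finset

/-- First-order condition for convex differentiable functions. -/
lemma sogd_grad_fo {E : Type*} [NormedAddCommGroup E] [InnerProductSpace ℝ E] [CompleteSpace E]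
    (f : E → ℝ) (hc : ConvexOn ℝ Set.univ f) (hd : Differentiable ℝ f) (u v : E) :
    f u - f v ≤ (inner ℝ (gradient f u) (u - v) : ℝ) := by
  set L : ℝ →ᵃ[ℝ] E := AffineMap.lineMap u v with hL
  have hL0 : L 0 = u := AffineMap.lineMap_apply_zero u v
  have hL1 : L 1 = v := AffineMap.lineMap_apply_one u v
  have hφc : ConvexOn ℝ Set.univ (f ∘ L) := by
    have := hc.comp_affineMap L
    simpa using this
  have hline : HasDerivAt (fun s : ℝ => L s) (v - u) 0 := by
    have h1 : HasDerivAt (fun s : ℝ => s • (v - u) + u) ((1:ℝ) • (v - u)) 0 :=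
      ((hasDerivAt_id (0:ℝ)).smul_const (v - u)).add_const u
    simp only [one_smul] at h1
    have heq : (fun s : ℝ => L s) = fun s : ℝ => s • (v - u) + u := by
      funext s
      simp [hL, AffineMap.lineMap_apply, vsub_eq_sub, vadd_eq_add]
    rw [heq]
    exact h1
  have hgrad : HasFDerivAt f (InnerProductSpace.toDual ℝ E (gradient f u)) u :=
    hasGradientAt_iff_hasFDerivAt.mp (hd u).hasGradientAt
  rw [← hL0] at hgrad
  have hφd : HasDerivAt (f ∘ L) ((inner ℝ (gradient f u) (v - u) : ℝ)) 0 := by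
    have h := hgrad.comp_hasDerivAt 0 hline
    simpa [InnerProductSpace.toDual_apply_apply, Function.comp, hL0] using h
  have hslope := hφc.le_slope_of_hasDerivAt (Set.mem_univ (0:ℝ)) (Set.mem_univ (1:ℝ))
      zero_lt_one hφd
  have hsl : slope (f ∘ L) 0 1 = f v - f u := by
    simp [slope_def_field, Function.comp, hL0, hL1]
  rw [hsl] at hslope
  have hneg : (inner ℝ (gradient f u) (u - v) : ℝ) = - (inner ℝ (gradient f u) (v - u) : ℝ) := by
    rw [← inner_neg_right, neg_sub]
  linarith

/-- Nonexpansiveness of the metric projection towards points of a convex set. -/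
lemma sogd_proj_nonexp {E : Type*} [NormedAddCommGroup E] [InnerProductSpace ℝ E]
    [CompleteSpace E]
    (W : Set E) (hW : Convex ℝ W) (proj : E → E)
    (hproj : ∀ x : E, proj x ∈ W ∧ ∀ y ∈ W, ‖x - proj x‖ ≤ ‖x - y‖)
    (u x : E) (hx : x ∈ W) : ‖proj u - x‖ ≤ ‖u - x‖ := by
  obtain ⟨hpW, hmin⟩ := hproj u
  have heq : ‖u - proj u‖ = ⨅ y : W, ‖u - y‖ := by
    haveI : Nonempty W := ⟨⟨_, hpW⟩⟩
    refine le_antisymm (le_ciInf fun y => hmin y y.2) ?_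
    refine ciInf_le ⟨0, ?_⟩ (⟨_, hpW⟩ : W)
    rintro b ⟨y, rfl⟩
    exact norm_nonneg _
  have hVI : (inner ℝ (u - proj u) (x - proj u) : ℝ) ≤ 0 :=
    (norm_eq_iInf_iff_real_inner_le_zero hW hpW).mp heq x hx
  have hexp : ‖u - x‖ ^ 2
      = ‖u - proj u‖ ^ 2 + 2 * (inner ℝ (u - proj u) (proj u - x) : ℝ) + ‖proj u - x‖ ^ 2 := by
    have h := norm_add_sq_real (u - proj u) (proj u - x)
    rwa [sub_add_sub_cancel] at h
  have hin : (inner ℝ (u - proj u) (proj u - x) : ℝ)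
      = - (inner ℝ (u - proj u) (x - proj u) : ℝ) := by
    rw [← inner_neg_right, neg_sub]
  have hsq : ‖proj u - x‖ ^ 2 ≤ ‖u - x‖ ^ 2 := by nlinarith [sq_nonneg ‖u - proj u‖]
  calc ‖proj u - x‖ = Real.sqrt (‖proj u - x‖ ^ 2) := (Real.sqrt_sq (norm_nonneg _)).symm
    _ ≤ Real.sqrt (‖u - x‖ ^ 2) := Real.sqrt_le_sqrt hsq
    _ = ‖u - x‖ := Real.sqrt_sq (norm_nonneg _)

/-- Main regret bound for the linearized losses, in the case `D > 0`. -/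
lemma sogd_aux {E : Type*} [NormedAddCommGroup E] [InnerProductSpace ℝ E] [CompleteSpace E]
    (W : Set E) (hWconvex : Convex ℝ W)
    (proj : E → E)
    (hproj : ∀ x : E, proj x ∈ W ∧ ∀ y ∈ W, ‖x - proj x‖ ≤ ‖x - y‖)
    (D : ℝ) (hD : 0 < D) (hdiam : ∀ x ∈ W, ∀ y ∈ W, ‖x - y‖ ≤ D)
    (T : ℕ) (δ : ℝ) (hδ : 0 < δ)
    (g : ℕ → E) (w : ℕ → E) (hw1 : w 1 ∈ W)
    (hwrec : ∀ t ≥ 1, w (t + 1) =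
      proj (w t - ((D / Real.sqrt 2) /
        Real.sqrt (δ + ∑ i ∈ Finset.Icc 1 t, ‖g i‖ ^ 2)) • g t))
    (x : E) (hx : x ∈ W) :
    ∑ t ∈ Finset.Icc 1 T, (inner ℝ (g t) (w t - x) : ℝ)
      ≤ Real.sqrt (2 * D ^ 2) * Real.sqrt (δ + ∑ t ∈ Finset.Icc 1 T, ‖g t‖ ^ 2) := by
  have hs2 : (0:ℝ) < Real.sqrt 2 := Real.sqrt_pos.mpr (by norm_num)
  have hs2sq : Real.sqrt 2 ^ 2 = 2 := Real.sq_sqrt (by norm_num)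
  set α : ℝ := D / Real.sqrt 2 with hα
  have hαpos : 0 < α := div_pos hD hs2
  set S : ℕ → ℝ := fun n => δ + ∑ i ∈ Finset.Icc 1 n, ‖g i‖ ^ 2 with hSdef
  have hSpos : ∀ n, 0 < S n := by
    intro n
    have h0 : (0:ℝ) ≤ ∑ i ∈ Finset.Icc 1 n, ‖g i‖ ^ 2 :=
      Finset.sum_nonneg fun i _ => sq_nonneg _
    simp only [hSdef]; linarith
  have hSsucc : ∀ n, S (n + 1) = S n + ‖g (n+1)‖ ^ 2 := by
    intro n
    simp only [hSdef]
    rw [Finset.sum_Icc_succ_top (Nat.le_add_left 1 n)]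
    ring
  have hSmono : ∀ n, S n ≤ S (n + 1) := fun n => by
    rw [hSsucc n]; nlinarith [sq_nonneg ‖g (n+1)‖]
  set η : ℕ → ℝ := fun n => α / Real.sqrt (S n) with hηdef
  have hηpos : ∀ n, 0 < η n := fun n => div_pos hαpos (Real.sqrt_pos.mpr (hSpos n))
  have hηanti : ∀ n, η (n + 1) ≤ η n :=
    fun n => div_le_div_of_nonneg_left hαpos.le (Real.sqrt_pos.mpr (hSpos n))
      (Real.sqrt_le_sqrt (hSmono n))
  have hwrec' : ∀ t ≥ 1, w (t + 1) = proj (w t - η t • g t) := hwrec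
  -- all iterates belong to W
  have hmem : ∀ t ≥ 1, w t ∈ W := by
    intro t ht
    induction t with
    | zero => omega
    | succ n ih =>
      rcases Nat.lt_or_ge n 1 with h | h
      · obtain rfl : n = 0 := by omega
        exact hw1
      · rw [hwrec' n h]; exact (hproj _).1
  have hdist : ∀ t ≥ 1, ‖w t - x‖ ≤ D := fun t ht => hdiam _ (hmem t ht) _ hx
  have hdistsq : ∀ t ≥ 1, ‖w t - x‖ ^ 2 ≤ D ^ 2 := by
    intro t ht
    have := hdist t ht
    nlinarith [norm_nonneg (w t - x)]
  -- per-step inequality (squared)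
  have hstep : ∀ t ≥ 1, ‖w (t+1) - x‖ ^ 2
      ≤ ‖w t - x‖ ^ 2 - 2 * η t * (inner ℝ (g t) (w t - x) : ℝ) + (η t) ^ 2 * ‖g t‖ ^ 2 := by
    intro t ht
    have h1 : ‖w (t+1) - x‖ ≤ ‖(w t - η t • g t) - x‖ := by
      rw [hwrec' t ht]
      exact sogd_proj_nonexp W hWconvex proj hproj _ x hx
    have h2 : ‖w (t+1) - x‖ ^ 2 ≤ ‖(w t - η t • g t) - x‖ ^ 2 :=
      pow_le_pow_left₀ (norm_nonneg _) h1 2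
    have h3 : (w t - η t • g t) - x = (w t - x) - η t • g t := by abel
    have hexp : ‖(w t - x) - η t • g t‖ ^ 2
        = ‖w t - x‖ ^ 2 - 2 * (η t * (inner ℝ (w t - x) (g t) : ℝ)) + (‖η t‖ * ‖g t‖) ^ 2 := by
      rw [norm_sub_sq_real, real_inner_smul_right, norm_smul]
    rw [h3, hexp] at h2
    have h4 : (inner ℝ (w t - x) (g t) : ℝ) = (inner ℝ (g t) (w t - x) : ℝ) := real_inner_comm _ _
    rw [h4] at h2
    have h5 : (‖η t‖ * ‖g t‖) ^ 2 = (η t)^2 * ‖g t‖ ^ 2 := by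
      rw [mul_pow, Real.norm_eq_abs, sq_abs]
    rw [h5] at h2
    linarith
  -- per-step inequality (divided form)
  have hstep' : ∀ t ≥ 1, (inner ℝ (g t) (w t - x) : ℝ)
      ≤ ‖w t - x‖ ^ 2 / (2 * η t) - ‖w (t+1) - x‖ ^ 2 / (2 * η t) + η t / 2 * ‖g t‖ ^ 2 := by
    intro t ht
    have h2η : (0:ℝ) < 2 * η t := by linarith [hηpos t]
    have hkey : ‖w t - x‖ ^ 2 / (2 * η t) - ‖w (t+1) - x‖ ^ 2 / (2 * η t)
          + η t / 2 * ‖g t‖ ^ 2 - (inner ℝ (g t) (w t - x) : ℝ)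
        = ((‖w t - x‖ ^ 2 - ‖w (t+1) - x‖ ^ 2) + (η t)^2 * ‖g t‖ ^ 2
            - 2 * η t * (inner ℝ (g t) (w t - x) : ℝ)) / (2 * η t) := by
      field_simp
      rw [sub_div, show 2 * η t * inner ℝ (g t) (w t - x) / η t = 2 * inner ℝ (g t) (w t - x) by
        field_simp [(hηpos t).ne']]
    have hnum : (0:ℝ) ≤ (‖w t - x‖ ^ 2 - ‖w (t+1) - x‖ ^ 2) + (η t)^2 * ‖g t‖ ^ 2
        - 2 * η t * (inner ℝ (g t) (w t - x) : ℝ) := by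
      have := hstep t ht; linarith
    have hfrac := div_nonneg hnum h2η.le
    rw [← hkey] at hfrac
    linarith
  -- telescoping bound by induction
  have hkey : ∀ n : ℕ, ∑ t ∈ Finset.Icc 1 n, (inner ℝ (g t) (w t - x) : ℝ)
      ≤ D ^ 2 / (2 * η n) - ‖w (n+1) - x‖ ^ 2 / (2 * η n)
        + ∑ t ∈ Finset.Icc 1 n, η t / 2 * ‖g t‖ ^ 2 := by
    intro n
    induction n with
    | zero =>
      rw [show Finset.Icc 1 0 = (∅ : Finset ℕ) from rfl]
      simp only [Finset.sum_empty]
      have h2 : ‖w 1 - x‖ ^ 2 ≤ D ^ 2 := hdistsq 1 le_rfl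
      have h2η : (0:ℝ) < 2 * η 0 := by linarith [hηpos 0]
      have h3 : ‖w 1 - x‖ ^ 2 / (2 * η 0) ≤ D ^ 2 / (2 * η 0) :=
        (div_le_div_iff_of_pos_right h2η).mpr h2
      linarith
    | succ n ih =>
      rw [Finset.sum_Icc_succ_top (Nat.le_add_left 1 n),
        Finset.sum_Icc_succ_top (Nat.le_add_left 1 n)]
      have hs := hstep' (n+1) (Nat.le_add_left 1 n)
      have hbD : ‖w (n+1) - x‖ ^ 2 ≤ D ^ 2 := hdistsq (n+1) (Nat.le_add_left 1 n)
      have h2η : (0:ℝ) < 2 * η (n+1) := by linarith [hηpos (n+1)]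
      have h2η' : 2 * η (n+1) ≤ 2 * η n := by linarith [hηanti n]
      have hmono : (D ^ 2 - ‖w (n+1) - x‖ ^ 2) / (2 * η n)
          ≤ (D ^ 2 - ‖w (n+1) - x‖ ^ 2) / (2 * η (n+1)) :=
        div_le_div_of_nonneg_left (by linarith) h2η h2η'
      rw [sub_div, sub_div] at hmono
      linarith
  -- bound on the stepsize sum
  have hsum2 : ∀ n : ℕ, ∑ t ∈ Finset.Icc 1 n, η t / 2 * ‖g t‖ ^ 2
      ≤ α * (Real.sqrt (S n) - Real.sqrt (S 0)) := by
    intro n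
    induction n with
    | zero =>
      rw [show Finset.Icc 1 0 = (∅ : Finset ℕ) from rfl]
      simp
    | succ n ih =>
      rw [Finset.sum_Icc_succ_top (Nat.le_add_left 1 n)]
      have hu : 0 < Real.sqrt (S (n+1)) := Real.sqrt_pos.mpr (hSpos (n+1))
      have hv : 0 ≤ Real.sqrt (S n) := Real.sqrt_nonneg _
      have hu2 : Real.sqrt (S (n+1)) ^ 2 = S (n+1) := Real.sq_sqrt (hSpos (n+1)).le
      have hv2 : Real.sqrt (S n) ^ 2 = S n := Real.sq_sqrt (hSpos n).le
      have ha : ‖g (n+1)‖ ^ 2 = S (n+1) - S n := by rw [hSsucc n]; ring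
      have hkey2 : ‖g (n+1)‖ ^ 2
          ≤ (Real.sqrt (S (n+1)) - Real.sqrt (S n)) * (2 * Real.sqrt (S (n+1))) := by
        nlinarith [sq_nonneg (Real.sqrt (S (n+1)) - Real.sqrt (S n))]
      have hterm : η (n+1) / 2 * ‖g (n+1)‖ ^ 2
          ≤ α * (Real.sqrt (S (n+1)) - Real.sqrt (S n)) := by
        have heq : η (n+1) / 2 * ‖g (n+1)‖ ^ 2
            = α * (‖g (n+1)‖ ^ 2 / (2 * Real.sqrt (S (n+1)))) := by
          rw [show η (n+1) = α / Real.sqrt (S (n+1)) from rfl, div_div,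
            div_mul_eq_mul_div, mul_div_assoc, mul_comm (Real.sqrt (S (n+1))) 2]
        rw [heq]
        refine mul_le_mul_of_nonneg_left ?_ hαpos.le
        rw [div_le_iff₀ (by linarith : (0:ℝ) < 2 * Real.sqrt (S (n+1)))]
        exact hkey2
      linarith
  -- assemble
  have h1 := hkey T
  have h2 : 0 ≤ ‖w (T+1) - x‖ ^ 2 / (2 * η T) :=
    div_nonneg (sq_nonneg _) (by linarith [hηpos T])
  have h3 := hsum2 T
  have h4 : 0 ≤ α * Real.sqrt (S 0) := mul_nonneg hαpos.le (Real.sqrt_nonneg _)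
  have hu : 0 < Real.sqrt (S T) := Real.sqrt_pos.mpr (hSpos T)
  have hfinal : D ^ 2 / (2 * η T) + α * Real.sqrt (S T)
      = Real.sqrt (2 * D ^ 2) * Real.sqrt (S T) := by
    have hsq2D : Real.sqrt (2 * D ^ 2) = Real.sqrt 2 * D := by
      rw [Real.sqrt_mul (by norm_num : (0:ℝ) ≤ 2), Real.sqrt_sq hD.le]
    rw [hsq2D]
    simp only [hηdef, hα]
    field_simp
    ring_nf
    linear_combination (-1 : ℝ) * hs2sq
  calc ∑ t ∈ Finset.Icc 1 T, (inner ℝ (g t) (w t - x) : ℝ)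
      ≤ D ^ 2 / (2 * η T) - ‖w (T+1) - x‖ ^ 2 / (2 * η T)
        + ∑ t ∈ Finset.Icc 1 T, η t / 2 * ‖g t‖ ^ 2 := h1
    _ ≤ D ^ 2 / (2 * η T) + α * Real.sqrt (S T) := by linarith
    _ = Real.sqrt (2 * D ^ 2) * Real.sqrt (S T) := hfinal

theorem stmt_15
    {E : Type*} [NormedAddCommGroup E] [InnerProductSpace ℝ E] [FiniteDimensional ℝ E]
    (W : Set E) (hWne : W.Nonempty) (hWclosed : IsClosed W) (hWconvex : Convex ℝ W)
    -- `proj` is the metric projection onto `W`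
    (proj : E → E)
    (hproj : ∀ x : E, proj x ∈ W ∧ ∀ y ∈ W, ‖x - proj x‖ ≤ ‖x - y‖)
    (D : ℝ) (hdiam : ∀ x ∈ W, ∀ y ∈ W, ‖x - y‖ ≤ D)
    (T : ℕ) (f : ℕ → E → ℝ)
    (hconv : ∀ t ∈ Finset.Icc 1 T, ConvexOn ℝ Set.univ (f t))
    (hdiff : ∀ t ∈ Finset.Icc 1 T, Differentiable ℝ (f t))
    (δ : ℝ) (hδ : 0 < δ)
    (w : ℕ → E) (hw1 : w 1 ∈ W)
    (hwrec : ∀ t ≥ 1, w (t + 1) =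
      proj (w t - ((D / Real.sqrt 2) /
        Real.sqrt (δ + ∑ i ∈ Finset.Icc 1 t, ‖gradient (f i) (w i)‖ ^ 2)) •
          gradient (f t) (w t)))
    (x : E) (hx : x ∈ W) :
    ∑ t ∈ Finset.Icc 1 T, f t (w t) - ∑ t ∈ Finset.Icc 1 T, f t x
      ≤ Real.sqrt (2 * D ^ 2)
        * Real.sqrt (δ + ∑ t ∈ Finset.Icc 1 T, ‖gradient (f t) (w t)‖ ^ 2) := by
  haveI : CompleteSpace E := FiniteDimensional.complete ℝ E
  have hD0 : 0 ≤ D := by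
    have := hdiam x hx x hx
    simpa using this
  rcases eq_or_lt_of_le hD0 with hDeq | hDpos
  · -- degenerate case D = 0 : all iterates in [1,T] equal x
    have hmem : ∀ t ≥ 1, w t ∈ W := by
      intro t ht
      induction t with
      | zero => omega
      | succ n ih =>
        rcases Nat.lt_or_ge n 1 with h | h
        · obtain rfl : n = 0 := by omega
          exact hw1
        · rw [hwrec n h]; exact (hproj _).1
    have hwt : ∀ t ∈ Finset.Icc 1 T, w t = x := by
      intro t ht
      have ht1 : 1 ≤ t := (Finset.mem_Icc.mp ht).1
      have h1 : ‖w t - x‖ ≤ D := hdiam _ (hmem t ht1) _ hx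
      have h2 : ‖w t - x‖ = 0 := le_antisymm (by linarith [hDeq]) (norm_nonneg _)
      have := norm_eq_zero.mp h2
      exact sub_eq_zero.mp this
    have hL : ∑ t ∈ Finset.Icc 1 T, f t (w t) = ∑ t ∈ Finset.Icc 1 T, f t x :=
      Finset.sum_congr rfl fun t ht => by rw [hwt t ht]
    have hR : 0 ≤ Real.sqrt (2 * D ^ 2)
        * Real.sqrt (δ + ∑ t ∈ Finset.Icc 1 T, ‖gradient (f t) (w t)‖ ^ 2) := by positivity
    linarith [hL.le, hL.ge]
  · -- main case D > 0
    have haux := sogd_aux W hWconvex proj hproj D hDpos hdiam T δ hδ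
      (fun t => gradient (f t) (w t)) w hw1 hwrec x hx
    have hsum : ∑ t ∈ Finset.Icc 1 T, f t (w t) - ∑ t ∈ Finset.Icc 1 T, f t x
        = ∑ t ∈ Finset.Icc 1 T, (f t (w t) - f t x) := by rw [Finset.sum_sub_distrib]
    rw [hsum]
    refine le_trans (Finset.sum_le_sum fun t ht =>
      sogd_grad_fo (f t) (hconv t ht) (hdiff t ht) (w t) x) ?_
    exact haux
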